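/- Let B be a category and let P, Q, R : Bᵒᵖ → Set be presheaves, with natural transformations σ : Q ⟶ P and τ : P ⟶ R such that every component of σ is surjective and every component of τ is injective. If Q and R preserve small products (i.e., preserve every small product that exists in Bᵒᵖ), then so does P. -/

import Mathlib

open CategoryTheory CategoryTheory.Limits

universe t w v u

/-- Statement 16: if `σ : Q ⟶ P` is a componentwise surjective natural transformation and
`τ : P ⟶ R` is a componentwise injective one, and the presheaves `Q` and `R` preserve all
small products that exist in `Bᵒᵖ`, then so does `P`. -/
theorem presheaf_preservesProducts_of_surj_inj {B : Type u} [Category.{v} B]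
    (P Q R : Bᵒᵖ ⥤ Type w)
    (σ : Q ⟶ P) (τ : P ⟶ R)
    (hσ : ∀ A : Bᵒᵖ, Function.Surjective (σ.app A))
    (hτ : ∀ A : Bᵒᵖ, Function.Injective (τ.app A))
    (hQ : ∀ ι : Type t, PreservesLimitsOfShape (Discrete ι) Q)
    (hR : ∀ ι : Type t, PreservesLimitsOfShape (Discrete ι) R) :
    ∀ ι : Type t, PreservesLimitsOfShape (Discrete ι) P := by
  intro ι
  constructor
  intro K
  constructor
  intro c hc
  have hQc : Nonempty (IsLimit (Q.mapCone c)) := ⟨isLimitOfPreserves Q hc⟩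
  have hRc : Nonempty (IsLimit (R.mapCone c)) := ⟨isLimitOfPreserves R hc⟩
  rw [Types.isLimit_iff] at hQc hRc
  rw [Types.isLimit_iff]
  intro s hs
  -- lift s to a section of K ⋙ Q
  choose sQ hsQ using fun j => hσ (K.obj j) (s j)
  have hsQsec : sQ ∈ (K ⋙ Q).sections := by
    rintro ⟨j⟩ ⟨j'⟩ f
    obtain rfl : j = j' := f.1.1
    rw [show f = 𝟙 _ from rfl]
    simp
  obtain ⟨q, hq, -⟩ := hQc sQ hsQsec
  refine ⟨σ.app c.pt q, fun j => ?_, fun y hy => ?_⟩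
  · have := FunctorToTypes.naturality σ (c.π.app j) q
    dsimp at this hq ⊢
    rw [← this, hq j, hsQ j]
  · -- uniqueness via τ and R
    have hssec : (fun j => τ.app (K.obj j) (s j)) ∈ (K ⋙ R).sections := by
      rintro ⟨j⟩ ⟨j'⟩ f
      obtain rfl : j = j' := f.1.1
      rw [show f = 𝟙 _ from rfl]
      simp
    obtain ⟨r, -, hr⟩ := hRc _ hssec
    apply hτ c.pt
    have key : ∀ (x : P.obj c.pt), (∀ j, P.map (c.π.app j) x = s j) →
        τ.app c.pt x = r := by
      intro x hx
      refine hr _ fun j => ?_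
      have := FunctorToTypes.naturality τ (c.π.app j) x
      dsimp at this ⊢
      rw [← this, hx j]
    have h1 := key y hy
    have h2 := key (σ.app c.pt q) (fun j => by
      have := FunctorToTypes.naturality σ (c.π.app j) q
      dsimp at this hq ⊢
      rw [← this, hq j, hsQ j])
    rw [h1, h2]
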